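/- If R₁ and R₂ are real rational functions with no common real poles, then the Cauchy index over ℝ of R₁ + R₂ equals the sum of the Cauchy indices of R₁ and R₂ over ℝ. -/

import Mathlib

open Polynomial Filter Topology
open scoped Classical

/-- The function `ℝ → ℝ` determined by a real rational function, evaluated via its
numerator and denominator in lowest terms. -/
noncomputable def evalFn (R : RatFunc ℝ) : ℝ → ℝ :=
  fun x => R.num.eval x / R.denom.eval x

/-- The Cauchy index of `f` at a point `ω`: `+1` if `f(ω−0) < 0 < f(ω+0)` (jump
from `−∞` to `+∞`), `−1` if `f(ω−0) > 0 > f(ω+0)`, and `0` otherwise (in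
particular at poles of even order). -/
noncomputable def indAt (f : ℝ → ℝ) (ω : ℝ) : ℤ :=
  if Tendsto f (𝓝[<] ω) atBot ∧ Tendsto f (𝓝[>] ω) atTop then 1
  else if Tendsto f (𝓝[<] ω) atTop ∧ Tendsto f (𝓝[>] ω) atBot then -1
  else 0

/-- The Cauchy index of a real rational function over `ℝ`: the sum of local
indices over all its real poles (the real roots of its denominator). -/
noncomputable def indR (R : RatFunc ℝ) : ℤ :=
  ∑ ω ∈ R.denom.roots.toFinset, indAt (evalFn R) ω

private lemma eval_ne_zero_eventually {p : Polynomial ℝ} (hp : p ≠ 0) (ω : ℝ) :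
    ∀ᶠ x in 𝓝[≠] ω, p.eval x ≠ 0 := by
  have hfin : ({x | p.IsRoot x} \ {ω}).Finite :=
    (Polynomial.finite_setOf_isRoot hp).diff
  have hcl : IsClosed ({x | p.IsRoot x} \ {ω}) := hfin.isClosed
  have hω : ω ∈ ({x | p.IsRoot x} \ {ω})ᶜ := by simp
  have hmem : ({x | p.IsRoot x} \ {ω})ᶜ ∈ 𝓝 ω := hcl.isOpen_compl.mem_nhds hω
  filter_upwards [nhdsWithin_le_nhds hmem, self_mem_nhdsWithin] with x hx hne h0
  exact hx ⟨h0, hne⟩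

private lemma tendsto_atBot_congr_add {f g F : ℝ → ℝ} {l : Filter ℝ} {c : ℝ}
    (hF : ∀ᶠ x in l, F x = f x + g x) (hg : Tendsto g l (𝓝 c)) :
    Tendsto F l atBot ↔ Tendsto f l atBot := by
  constructor
  · intro h
    have h2 : Tendsto (fun x => F x + (-g x)) l atBot := h.atBot_add hg.neg
    exact h2.congr' (by filter_upwards [hF] with x hx; rw [hx]; ring)
  · intro h
    have h2 : Tendsto (fun x => f x + g x) l atBot := h.atBot_add hg
    exact h2.congr' (by filter_upwards [hF] with x hx; rw [hx])

private lemma tendsto_atTop_congr_add {f g F : ℝ → ℝ} {l : Filter ℝ} {c : ℝ}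
    (hF : ∀ᶠ x in l, F x = f x + g x) (hg : Tendsto g l (𝓝 c)) :
    Tendsto F l atTop ↔ Tendsto f l atTop := by
  constructor
  · intro h
    have h2 : Tendsto (fun x => F x + (-g x)) l atTop := h.atTop_add hg.neg
    exact h2.congr' (by filter_upwards [hF] with x hx; rw [hx]; ring)
  · intro h
    have h2 : Tendsto (fun x => f x + g x) l atTop := h.atTop_add hg
    exact h2.congr' (by filter_upwards [hF] with x hx; rw [hx])

private lemma indAt_add_right {f g F : ℝ → ℝ} {ω c : ℝ}
    (hF : ∀ᶠ x in 𝓝[≠] ω, F x = f x + g x)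
    (hg : Tendsto g (𝓝 ω) (𝓝 c)) :
    indAt F ω = indAt f ω := by
  have hlt : 𝓝[<] ω ≤ 𝓝[≠] ω := nhdsWithin_mono _ (fun x hx => ne_of_lt hx)
  have hgt : 𝓝[>] ω ≤ 𝓝[≠] ω := nhdsWithin_mono _ (fun x hx => ne_of_gt hx)
  have h1 := tendsto_atBot_congr_add (hlt hF) (hg.mono_left nhdsWithin_le_nhds)
  have h2 := tendsto_atTop_congr_add (hgt hF) (hg.mono_left nhdsWithin_le_nhds)
  have h3 := tendsto_atTop_congr_add (hlt hF) (hg.mono_left nhdsWithin_le_nhds)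
  have h4 := tendsto_atBot_congr_add (hgt hF) (hg.mono_left nhdsWithin_le_nhds)
  unfold indAt
  rw [h1, h2, h3, h4]

private lemma eval₂_id' (p : Polynomial ℝ) (x : ℝ) :
    Polynomial.eval₂ (RingHom.id ℝ) x p = p.eval x := rfl

private lemma evalFn_eq_eval (R : RatFunc ℝ) (x : ℝ) :
    evalFn R x = RatFunc.eval (RingHom.id ℝ) x R := rfl

private lemma evalFn_continuousAt {R : RatFunc ℝ} {ω : ℝ}
    (h : R.denom.eval ω ≠ 0) : ContinuousAt (evalFn R) ω :=
  (R.num.continuousAt).div (R.denom.continuousAt) h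

private lemma eventually_evalFn_add (R₁ R₂ : RatFunc ℝ) (ω : ℝ) :
    ∀ᶠ x in 𝓝[≠] ω, evalFn (R₁ + R₂) x = evalFn R₁ x + evalFn R₂ x := by
  filter_upwards [eval_ne_zero_eventually (R₁.denom_ne_zero) ω,
    eval_ne_zero_eventually (R₂.denom_ne_zero) ω] with x h1 h2
  have h1' : Polynomial.eval₂ (RingHom.id ℝ) x R₁.denom ≠ 0 := by rwa [eval₂_id']
  have h2' : Polynomial.eval₂ (RingHom.id ℝ) x R₂.denom ≠ 0 := by rwa [eval₂_id']
  show RatFunc.eval (RingHom.id ℝ) x (R₁ + R₂) =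
    RatFunc.eval (RingHom.id ℝ) x R₁ + RatFunc.eval (RingHom.id ℝ) x R₂
  exact RatFunc.eval_add (K := ℝ) (L := ℝ) (f := RingHom.id ℝ) (a := x) h1' h2'

/-- real roots of the denominator of a sum, when poles are disjoint -/
private lemma root_denom_add_iff (R₁ R₂ : RatFunc ℝ)
    (hdisj : ∀ x : ℝ, ¬(R₁.denom.eval x = 0 ∧ R₂.denom.eval x = 0)) (ω : ℝ) :
    (R₁ + R₂).denom.eval ω = 0 ↔ R₁.denom.eval ω = 0 ∨ R₂.denom.eval ω = 0 := by
  constructor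
  · intro h
    have hdvd := RatFunc.denom_add_dvd R₁ R₂
    have h' : (X - C ω) ∣ (R₁ + R₂).denom := (Polynomial.dvd_iff_isRoot).mpr h
    have h'' : (X - C ω) ∣ R₁.denom * R₂.denom := h'.trans hdvd
    rcases (Polynomial.prime_X_sub_C ω).2.2 _ _ h'' with h1 | h2
    · exact Or.inl (Polynomial.dvd_iff_isRoot.mp h1)
    · exact Or.inr (Polynomial.dvd_iff_isRoot.mp h2)
  · intro h
    have key := congrArg (Polynomial.eval ω) (RatFunc.num_denom_add R₁ R₂)
    simp only [Polynomial.eval_mul, Polynomial.eval_add] at key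
    rcases h with h1 | h2
    · have hn1 : R₁.num.eval ω ≠ 0 := by
        intro hn
        obtain ⟨u, v, huv⟩ := RatFunc.isCoprime_num_denom R₁
        have := congrArg (Polynomial.eval ω) huv
        simp [hn, h1] at this
      have hd2 : R₂.denom.eval ω ≠ 0 := fun h2 => hdisj ω ⟨h1, h2⟩
      rw [h1] at key
      have key' : (R₁.num.eval ω * R₂.denom.eval ω) * (R₁ + R₂).denom.eval ω = 0 := by
        rw [show (R₁.num.eval ω * R₂.denom.eval ω) * (R₁ + R₂).denom.eval ω =
          (R₁.num.eval ω * R₂.denom.eval ω + 0 * R₂.num.eval ω) * (R₁ + R₂).denom.eval ω by ring,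
          ← key]; ring
      rcases mul_eq_zero.mp key' with h | h
      · exact absurd h (mul_ne_zero hn1 hd2)
      · exact h
    · have hn2 : R₂.num.eval ω ≠ 0 := by
        intro hn
        obtain ⟨u, v, huv⟩ := RatFunc.isCoprime_num_denom R₂
        have := congrArg (Polynomial.eval ω) huv
        simp [hn, h2] at this
      have hd1 : R₁.denom.eval ω ≠ 0 := fun h1 => hdisj ω ⟨h1, h2⟩
      rw [h2] at key
      have key' : (R₁.denom.eval ω * R₂.num.eval ω) * (R₁ + R₂).denom.eval ω = 0 := by
        rw [show (R₁.denom.eval ω * R₂.num.eval ω) * (R₁ + R₂).denom.eval ω =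
          (R₁.num.eval ω * 0 + R₁.denom.eval ω * R₂.num.eval ω) * (R₁ + R₂).denom.eval ω by ring,
          ← key]; ring
      rcases mul_eq_zero.mp key' with h | h
      · exact absurd h (mul_ne_zero hd1 hn2)
      · exact h

theorem stmt19 (R₁ R₂ : RatFunc ℝ)
    (hdisj : ∀ x : ℝ, ¬(R₁.denom.eval x = 0 ∧ R₂.denom.eval x = 0)) :
    indR (R₁ + R₂) = indR R₁ + indR R₂ := by
  have hroots : (R₁ + R₂).denom.roots.toFinset =
      R₁.denom.roots.toFinset ∪ R₂.denom.roots.toFinset := by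
    ext x
    simp only [Multiset.mem_toFinset, Finset.mem_union,
      Polynomial.mem_roots ((R₁ + R₂).denom_ne_zero),
      Polynomial.mem_roots (R₁.denom_ne_zero), Polynomial.mem_roots (R₂.denom_ne_zero)]
    exact root_denom_add_iff R₁ R₂ hdisj x
  have hdisjF : Disjoint R₁.denom.roots.toFinset R₂.denom.roots.toFinset := by
    rw [Finset.disjoint_left]
    intro x hx1 hx2
    simp only [Multiset.mem_toFinset, Polynomial.mem_roots R₁.denom_ne_zero] at hx1
    simp only [Multiset.mem_toFinset, Polynomial.mem_roots R₂.denom_ne_zero] at hx2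
    exact hdisj x ⟨hx1, hx2⟩
  unfold indR
  rw [hroots, Finset.sum_union hdisjF]
  congr 1
  · apply Finset.sum_congr rfl
    intro ω hω
    simp only [Multiset.mem_toFinset, Polynomial.mem_roots R₁.denom_ne_zero] at hω
    have hd2 : R₂.denom.eval ω ≠ 0 := fun h2 => hdisj ω ⟨hω, h2⟩
    exact indAt_add_right (eventually_evalFn_add R₁ R₂ ω) (evalFn_continuousAt hd2)
  · apply Finset.sum_congr rfl
    intro ω hω
    simp only [Multiset.mem_toFinset, Polynomial.mem_roots R₂.denom_ne_zero] at hω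
    have hd1 : R₁.denom.eval ω ≠ 0 := fun h1 => hdisj ω ⟨h1, hω⟩
    have hev : ∀ᶠ x in 𝓝[≠] ω, evalFn (R₁ + R₂) x = evalFn R₂ x + evalFn R₁ x := by
      filter_upwards [eventually_evalFn_add R₁ R₂ ω] with x hx
      rw [hx]; ring
    exact indAt_add_right hev (evalFn_continuousAt hd1)
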